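/- Let f : [a,b) → ℝ be convex, x ∈ [a,b)^n, p a nonnegative n-tuple with ∑pᵢ = 1, and for each k = 1,…,N let q_k be a positive n-tuple with ∑ᵢ q_{i,k} = 1. Define recursively m_k = min_i (p_{i,k}/q_{i,k}) with p_{i,1} = pᵢ, x_{i,1} = xᵢ, and for k ≥ 2: p_{i,k} = p_{i,k−1} − m_{k−1} q_{i,k−1} and x_{i,k} = x_{i,k−1} when m_{k−1} ≠ p_{i,k−1}/q_{i,k−1}, while p_{i,k} = m_{k−1}/s_{k−1} and x_{i,k} = ∑ⱼ q_{j,k−1} x_{j,k−1} for the s_{k−1} minimizing indices. Then J(f,x₁,p) − ∑_{k=1}^N m_k · J(f,x_k,q_k) ≥ 0. -/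

import Mathlib

/-- Theorem 6 of the paper:
`J(f,x₁,p₁) − ∑_{k=1}^N m_k · J(f,x_k,q_k) ≥ 0` under the recursive
construction of `p_k`, `x_k`, `m_k` (weights `q_k` may vary with `k`). -/
theorem stmt7 {a b : ℝ} (f : ℝ → ℝ) (hf : ConvexOn ℝ (Set.Ico a b) f)
    {n : ℕ} (hn : 0 < n) (N : ℕ)
    (x : Fin n → ℝ) (hx : ∀ i, x i ∈ Set.Ico a b)
    (p : Fin n → ℝ) (hp : ∀ i, 0 ≤ p i) (hps : ∑ i, p i = 1)
    (q : ℕ → Fin n → ℝ) (hq : ∀ k i, 0 < q k i) (hqs : ∀ k, ∑ i, q k i = 1)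
    (P X : ℕ → Fin n → ℝ) (m : ℕ → ℝ)
    (hP0 : P 0 = p) (hX0 : X 0 = x)
    (hm : ∀ k, m k =
      Finset.univ.inf' ⟨⟨0, hn⟩, Finset.mem_univ _⟩ (fun i => P k i / q k i))
    (hPs : ∀ k i, P (k+1) i =
      if P k i / q k i = m k then
        m k / (((Finset.univ.filter (fun j => P k j / q k j = m k)).card : ℝ))
      else P k i - m k * q k i)
    (hXs : ∀ k i, X (k+1) i =
      if P k i / q k i = m k then ∑ j, q k j * X k j else X k i) :
    (∑ i, p i * f (x i) - f (∑ i, p i * x i)) -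
      ∑ k ∈ Finset.range N,
        m k * (∑ i, q k i * f (X k i) - f (∑ i, q k i * X k i)) ≥ 0 := by
  classical
  have hqne : ∀ k i, q k i ≠ 0 := fun k i => (hq k i).ne'
  have hfil : ∀ k, (Finset.univ.filter (fun j => P k j / q k j = m k)).Nonempty := by
    intro k
    obtain ⟨i, _, hie⟩ := Finset.exists_mem_eq_inf'
      (⟨⟨0, hn⟩, Finset.mem_univ _⟩ : (Finset.univ : Finset (Fin n)).Nonempty)
      (fun i => P k i / q k i)
    exact ⟨i, Finset.mem_filter.mpr ⟨Finset.mem_univ _, by rw [hm k, hie]⟩⟩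
  -- key one-step identity, for arbitrary g
  have step : ∀ (k : ℕ) (g : ℝ → ℝ),
      ∑ i, P (k+1) i * g (X (k+1) i)
        = (∑ i, P k i * g (X k i))
          - m k * ((∑ i, q k i * g (X k i)) - g (∑ i, q k i * X k i)) := by
    intro k g
    have hsne : ((Finset.univ.filter (fun j => P k j / q k j = m k)).card : ℝ) ≠ 0 :=
      Nat.cast_ne_zero.mpr (Finset.card_ne_zero.mpr (hfil k))
    have h1 : ∑ i, P (k+1) i * g (X (k+1) i)
        = ∑ i, (if P k i / q k i = m k then
            (m k / ((Finset.univ.filter (fun j => P k j / q k j = m k)).card : ℝ))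
              * g (∑ j, q k j * X k j)
          else (P k i - m k * q k i) * g (X k i)) := by
      refine Finset.sum_congr rfl fun i _ => ?_
      rw [hPs k i, hXs k i]
      split <;> rfl
    rw [h1, Finset.sum_ite]
    have hconst : ∑ _i ∈ Finset.univ.filter (fun i => P k i / q k i = m k),
        (m k / ((Finset.univ.filter (fun j => P k j / q k j = m k)).card : ℝ))
          * g (∑ j, q k j * X k j)
        = m k * g (∑ j, q k j * X k j) := by
      rw [Finset.sum_const, nsmul_eq_mul]
      field_simp
    have hsub : ∑ i ∈ Finset.univ.filter (fun i => ¬ P k i / q k i = m k),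
        (P k i - m k * q k i) * g (X k i)
        = (∑ i ∈ Finset.univ.filter (fun i => ¬ P k i / q k i = m k), P k i * g (X k i))
          - m k * ∑ i ∈ Finset.univ.filter (fun i => ¬ P k i / q k i = m k),
              q k i * g (X k i) := by
      rw [Finset.mul_sum, ← Finset.sum_sub_distrib]
      exact Finset.sum_congr rfl fun i _ => by ring
    have hPA : ∑ i ∈ Finset.univ.filter (fun i => P k i / q k i = m k), P k i * g (X k i)
        = m k * ∑ i ∈ Finset.univ.filter (fun i => P k i / q k i = m k),
            q k i * g (X k i) := by
      rw [Finset.mul_sum]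
      refine Finset.sum_congr rfl fun i hi => ?_
      have h2 := (Finset.mem_filter.mp hi).2
      rw [(div_eq_iff (hqne k i)).mp h2]
      ring
    have hsplitP := Finset.sum_filter_add_sum_filter_not Finset.univ
      (fun i => P k i / q k i = m k) (fun i => P k i * g (X k i))
    have hsplitq := Finset.sum_filter_add_sum_filter_not Finset.univ
      (fun i => P k i / q k i = m k) (fun i => q k i * g (X k i))
    rw [hconst, hsub]
    rw [← hsplitP, ← hsplitq, hPA]
    ring
  -- invariants
  have hmk : ∀ k, (∀ i, 0 ≤ P k i) → 0 ≤ m k := by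
    intro k h1
    rw [hm k]
    exact Finset.le_inf' _ _ fun i _ => div_nonneg (h1 i) (hq k i).le
  have inv : ∀ k, (∀ i, 0 ≤ P k i) ∧ (∑ i, P k i = 1) ∧ (∀ i, X k i ∈ Set.Ico a b) := by
    intro k
    induction k with
    | zero => exact ⟨hP0 ▸ hp, hP0 ▸ hps, hX0 ▸ hx⟩
    | succ k ih =>
      obtain ⟨h1, h2, h3⟩ := ih
      have hm0 : 0 ≤ m k := hmk k h1
      refine ⟨?_, ?_, ?_⟩
      · intro i
        rw [hPs k i]
        split
        · exact div_nonneg hm0 (Nat.cast_nonneg _)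
        · have hle : m k ≤ P k i / q k i := by
            rw [hm k]; exact Finset.inf'_le _ (Finset.mem_univ i)
          have := (le_div_iff₀ (hq k i)).mp hle
          linarith
      · have := step k (fun _ => 1)
        simp only [mul_one] at this
        rw [this, h2, hqs k]
        ring
      · intro i
        rw [hXs k i]
        split
        · have := (convex_Ico a b).sum_mem (t := Finset.univ)
            (fun j _ => (hq k j).le) (hqs k) (fun j _ => h3 j)
          simpa [smul_eq_mul] using this
        · exact h3 i
  have invx : ∀ k, ∑ i, P k i * X k i = ∑ i, p i * x i := by
    intro k
    induction k with
    | zero => rw [hP0, hX0]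
    | succ k ih =>
      have := step k (fun t => t)
      rw [this, ih]
      ring
  have tele : ∀ M : ℕ, ∑ k ∈ Finset.range M,
      m k * ((∑ i, q k i * f (X k i)) - f (∑ i, q k i * X k i))
      = (∑ i, p i * f (x i)) - ∑ i, P M i * f (X M i) := by
    intro M
    induction M with
    | zero => simp [hP0, hX0]
    | succ M ih =>
      rw [Finset.sum_range_succ, ih, step M f]
      ring
  obtain ⟨h1, h2, h3⟩ := inv N
  have jensen : f (∑ i, P N i * X N i) ≤ ∑ i, P N i * f (X N i) := by
    have := hf.map_sum_le (t := Finset.univ) (fun i _ => h1 i) h2 (fun i _ => h3 i)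
    simpa [smul_eq_mul] using this
  rw [invx N] at jensen
  rw [tele N]
  linarith
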